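/- Let m > 0, B : ℝ → ℝ ∪ {∞} with B(p) = b p² for some b ∈ (ℝ∖{0}) ∪ {∞}. Define for t ∈ ℝ the operator U(t) on functions f : ℝ² → ℂ by (U(t)f)(q,p) = f(q − pt/m, p) − [θ(tqp)θ(|pt|/m − |q|)/(1 + sgn(t)·2i|p|/(mB(p)))]·(f(q − pt/m, p) − f(−q + pt/m, −p)), where θ is the Heaviside function and 1/∞ := 0. Then for all s, t of the same sign (s·t ≥ 0), U(s)U(t) = U(s+t) on L²(ℝ²), and each U(t) is an isometry of L²(ℝ²). -/

import Mathlib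

open MeasureTheory
open scoped ENNReal NNReal

/-- Heaviside step function: `1` for positive arguments, `0` otherwise. -/
noncomputable def heaviside (x : ℝ) : ℝ := if 0 < x then 1 else 0

/-- `1/B(p)` for `B(p) = b p²`, with `b ∈ (ℝ∖{0}) ∪ {∞}` (`none` encodes `∞`, `1/∞ := 0`). -/
noncomputable def invB : Option ℝ → ℝ → ℝ
  | some b, p => 1 / (b * p ^ 2)
  | none, _ => 0

/-- The classical evolution group `e^{-itL_B}` of the singularly perturbed Liouville operator. -/
noncomputable def Ucl (m : ℝ) (b : Option ℝ) (t : ℝ) (f : ℝ × ℝ → ℂ) : ℝ × ℝ → ℂ :=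
  fun z =>
    f (z.1 - z.2 * t / m, z.2)
      - (((heaviside (t * z.1 * z.2) * heaviside (|z.2 * t| / m - |z.1|) : ℝ) : ℂ)
            / (1 + (Real.sign t : ℂ) * (2 * Complex.I * ((|z.2| : ℝ) : ℂ)
                * ((invB b z.2 : ℝ) : ℂ)) / (m : ℂ)))
          * (f (z.1 - z.2 * t / m, z.2) - f (-z.1 + z.2 * t / m, -z.2))

namespace Stmt12Aux

/-- The mixing coefficient appearing in `Ucl`. -/
noncomputable def C (m : ℝ) (b : Option ℝ) (t : ℝ) (z : ℝ × ℝ) : ℂ :=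
  ((heaviside (t * z.1 * z.2) * heaviside (|z.2 * t| / m - |z.1|) : ℝ) : ℂ)
    / (1 + (Real.sign t : ℂ) * (2 * Complex.I * ((|z.2| : ℝ) : ℂ)
        * ((invB b z.2 : ℝ) : ℂ)) / (m : ℂ))

/-- The denominator, depending only on `sign t` and `p`. -/
noncomputable def Dc (m : ℝ) (b : Option ℝ) (t : ℝ) (p : ℝ) : ℂ :=
  1 + (Real.sign t : ℂ) * (2 * Complex.I * ((|p| : ℝ) : ℂ) * ((invB b p : ℝ) : ℂ)) / (m : ℂ)

lemma ucl_apply (m : ℝ) (b : Option ℝ) (t : ℝ) (f : ℝ × ℝ → ℂ) (z : ℝ × ℝ) :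
    Ucl m b t f z = f (z.1 - z.2 * t / m, z.2)
      - C m b t z * (f (z.1 - z.2 * t / m, z.2) - f (-z.1 + z.2 * t / m, -z.2)) := rfl

lemma heaviside_mul (x y : ℝ) :
    heaviside x * heaviside y = if 0 < x ∧ 0 < y then 1 else 0 := by
  unfold heaviside
  by_cases hx : 0 < x <;> by_cases hy : 0 < y <;> simp [hx, hy]

lemma C_eq (m : ℝ) (b : Option ℝ) (t : ℝ) (z : ℝ × ℝ) :
    C m b t z = if 0 < t * z.1 * z.2 ∧ |z.1| < |z.2 * t| / m then 1 / Dc m b t z.2 else 0 := by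
  unfold C Dc
  rw [heaviside_mul]
  simp only [sub_pos]
  split_ifs with h <;> simp

lemma invB_neg (b : Option ℝ) (p : ℝ) : invB b (-p) = invB b p := by
  cases b <;> simp [invB]

lemma Dc_congr (m : ℝ) (b : Option ℝ) {s t : ℝ} (p : ℝ) (h : Real.sign s = Real.sign t) :
    Dc m b s p = Dc m b t p := by unfold Dc; rw [h]

lemma C_even (m : ℝ) (b : Option ℝ) (t : ℝ) (q p : ℝ) :
    C m b t (-q, -p) = C m b t (q, p) := by
  unfold C
  have e1 : t * (-q, -p).1 * (-q, -p).2 = t * q * p := by dsimp only; ring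
  have e2 : |(-q, -p).2 * t| = |p * t| := by dsimp only; rw [neg_mul, abs_neg]
  have e3 : |(-q, -p).1| = |q| := by dsimp only; rw [abs_neg]
  have e4 : |(-q, -p).2| = |p| := by dsimp only; rw [abs_neg]
  have e5 : invB b (-q, -p).2 = invB b p := invB_neg b p
  rw [e1, e2, e3, e4, e5]

lemma between_iff (a τ : ℝ) :
    (0 < a * τ ∧ |τ| < |a|) ↔ (0 < τ ∧ τ < a) ∨ (a < τ ∧ τ < 0) := by
  constructor
  · rintro ⟨h1, h2⟩
    rcases lt_trichotomy τ 0 with hτ | hτ | hτ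
    · have ha : a < 0 := by nlinarith
      right
      rw [abs_of_neg hτ, abs_of_neg ha] at h2
      exact ⟨by linarith, hτ⟩
    · rw [hτ] at h1; simp at h1
    · have ha : 0 < a := by nlinarith
      left
      rw [abs_of_pos hτ, abs_of_pos ha] at h2
      exact ⟨hτ, h2⟩
  · rintro (⟨u, v⟩ | ⟨u, v⟩)
    · have ha : 0 < a := lt_trans u v
      exact ⟨mul_pos ha u, by rw [abs_of_pos u, abs_of_pos ha]; exact v⟩
    · have ha : a < 0 := lt_trans u v
      exact ⟨by nlinarith, by rw [abs_of_neg v, abs_of_neg ha]; linarith⟩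

lemma cond_iff (m q p r : ℝ) (hm : 0 < m) (hp : p ≠ 0) :
    (0 < r * q * p ∧ |q| < |p * r| / m) ↔
      (0 < m * q / p ∧ m * q / p < r) ∨ (r < m * q / p ∧ m * q / p < 0) := by
  rw [← between_iff r (m * q / p)]
  have hpa : 0 < |p| := abs_pos.2 hp
  have hp2 : 0 < p ^ 2 := by positivity
  have habs : |m * q / p| = m * |q| / |p| := by
    rw [abs_div, abs_mul, abs_of_pos hm]
  constructor
  · rintro ⟨h1, h2⟩
    constructor
    · have e : r * (m * q / p) = (r * q * p) * (m / p ^ 2) := by field_simp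
      rw [e]; exact mul_pos h1 (by positivity)
    · rw [habs, div_lt_iff₀ hpa]
      rw [abs_mul, lt_div_iff₀ hm] at h2
      nlinarith
  · rintro ⟨h1, h2⟩
    constructor
    · have e : r * q * p = (r * (m * q / p)) * (p ^ 2 / m) := by field_simp
      rw [e]; exact mul_pos h1 (by positivity)
    · rw [habs, div_lt_iff₀ hpa] at h2
      rw [abs_mul, lt_div_iff₀ hm]
      nlinarith

lemma key_cases (s t τ : ℝ) (hst : 0 ≤ s * t) (h1 : τ ≠ s) :
    (¬(((0 < τ ∧ τ < s) ∨ (s < τ ∧ τ < 0)) ∧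
        ((0 < τ - s ∧ τ - s < t) ∨ (t < τ - s ∧ τ - s < 0)))) ∧
    (((0 < τ ∧ τ < s + t) ∨ (s + t < τ ∧ τ < 0)) ↔
        (((0 < τ ∧ τ < s) ∨ (s < τ ∧ τ < 0)) ∨
         ((0 < τ - s ∧ τ - s < t) ∨ (t < τ - s ∧ τ - s < 0)))) ∧
    (((0 < τ ∧ τ < s) ∨ (s < τ ∧ τ < 0)) → Real.sign s = Real.sign (s + t)) ∧
    (((0 < τ - s ∧ τ - s < t) ∨ (t < τ - s ∧ τ - s < 0)) → Real.sign t = Real.sign (s + t)) := by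
  have hts1 : 0 < s → 0 ≤ t := by intro hs; by_contra h; push_neg at h; nlinarith
  have hts2 : s < 0 → t ≤ 0 := by intro hs; by_contra h; push_neg at h; nlinarith
  have hts3 : 0 < t → 0 ≤ s := by intro ht; by_contra h; push_neg at h; nlinarith
  have hts4 : t < 0 → s ≤ 0 := by intro ht; by_contra h; push_neg at h; nlinarith
  refine ⟨?_, ?_, ?_, ?_⟩
  · rintro ⟨⟨a1, a2⟩ | ⟨a1, a2⟩, ⟨b1, b2⟩ | ⟨b1, b2⟩⟩
    · linarith
    · have hs : 0 < s := lt_trans a1 a2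
      have ht : t < 0 := lt_trans b1 b2
      nlinarith
    · have hs : s < 0 := lt_trans a1 a2
      have ht : 0 < t := lt_trans b1 b2
      nlinarith
    · linarith
  · constructor
    · rintro (⟨c1, c2⟩ | ⟨c1, c2⟩)
      · rcases lt_trichotomy τ s with h | h | h
        · exact Or.inl (Or.inl ⟨c1, h⟩)
        · exact absurd h h1
        · exact Or.inr (Or.inl ⟨by linarith, by linarith⟩)
      · rcases lt_trichotomy τ s with h | h | h
        · exact Or.inr (Or.inr ⟨by linarith, by linarith⟩)
        · exact absurd h h1
        · exact Or.inl (Or.inr ⟨h, c2⟩)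
    · rintro ((⟨a1, a2⟩ | ⟨a1, a2⟩) | (⟨b1, b2⟩ | ⟨b1, b2⟩))
      · have hs : 0 < s := lt_trans a1 a2
        have := hts1 hs
        exact Or.inl ⟨a1, by linarith⟩
      · have hs : s < 0 := lt_trans a1 a2
        have := hts2 hs
        exact Or.inr ⟨by linarith, a2⟩
      · have ht : 0 < t := lt_trans b1 b2
        have := hts3 ht
        exact Or.inl ⟨by linarith, by linarith⟩
      · have ht : t < 0 := lt_trans b1 b2
        have := hts4 ht
        exact Or.inr ⟨by linarith, by linarith⟩
  · rintro (⟨a1, a2⟩ | ⟨a1, a2⟩)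
    · have hs : 0 < s := lt_trans a1 a2
      have := hts1 hs
      rw [Real.sign_of_pos hs, Real.sign_of_pos (by linarith : (0:ℝ) < s + t)]
    · have hs : s < 0 := lt_trans a1 a2
      have := hts2 hs
      rw [Real.sign_of_neg hs, Real.sign_of_neg (by linarith : s + t < 0)]
  · rintro (⟨b1, b2⟩ | ⟨b1, b2⟩)
    · have ht : 0 < t := lt_trans b1 b2
      have := hts3 ht
      rw [Real.sign_of_pos ht, Real.sign_of_pos (by linarith : (0:ℝ) < s + t)]
    · have ht : t < 0 := lt_trans b1 b2
      have := hts4 ht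
      rw [Real.sign_of_neg ht, Real.sign_of_neg (by linarith : s + t < 0)]

lemma C_law (m : ℝ) (hm : 0 < m) (b : Option ℝ) (s t : ℝ) (hst : 0 ≤ s * t) (z : ℝ × ℝ)
    (hp : z.2 ≠ 0) (h1 : m * z.1 ≠ z.2 * s) :
    C m b s z + C m b t (z.1 - z.2 * s / m, z.2)
      - 2 * C m b s z * C m b t (z.1 - z.2 * s / m, z.2) = C m b (s + t) z := by
  have hτ1 : m * z.1 / z.2 ≠ s := by
    intro h
    exact h1 (((div_eq_iff hp).mp h).trans (mul_comm s z.2))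
  obtain ⟨knd, kiff, ksgn1, ksgn2⟩ := key_cases s t (m * z.1 / z.2) hst hτ1
  have hw : m * (z.1 - z.2 * s / m) / z.2 = m * z.1 / z.2 - s := by
    field_simp
  rw [C_eq, C_eq, C_eq]
  dsimp only
  simp only [cond_iff m z.1 z.2 s hm hp, cond_iff m (z.1 - z.2 * s / m) z.2 t hm hp,
    cond_iff m z.1 z.2 (s + t) hm hp, hw]
  by_cases hA : (0 < m * z.1 / z.2 ∧ m * z.1 / z.2 < s) ∨ (s < m * z.1 / z.2 ∧ m * z.1 / z.2 < 0)
  · have hB : ¬((0 < m * z.1 / z.2 - s ∧ m * z.1 / z.2 - s < t) ∨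
        (t < m * z.1 / z.2 - s ∧ m * z.1 / z.2 - s < 0)) := fun hB => knd ⟨hA, hB⟩
    rw [if_pos hA, if_neg hB, if_pos (kiff.mpr (Or.inl hA)), Dc_congr m b z.2 (ksgn1 hA)]
    ring
  · by_cases hB : (0 < m * z.1 / z.2 - s ∧ m * z.1 / z.2 - s < t) ∨
        (t < m * z.1 / z.2 - s ∧ m * z.1 / z.2 - s < 0)
    · rw [if_neg hA, if_pos hB, if_pos (kiff.mpr (Or.inr hB)), Dc_congr m b z.2 (ksgn2 hB)]
      ring
    · rw [if_neg hA, if_neg hB, if_neg (fun hc => (kiff.mp hc).elim hA hB)]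
      ring

lemma ucl_comp_eq (m : ℝ) (hm : 0 < m) (b : Option ℝ) (s t : ℝ) (hst : 0 ≤ s * t)
    (f : ℝ × ℝ → ℂ) (z : ℝ × ℝ) (hp : z.2 ≠ 0) (h1 : m * z.1 ≠ z.2 * s) :
    Ucl m b s (Ucl m b t f) z = Ucl m b (s + t) f z := by
  have hlaw := C_law m hm b s t hst z hp h1
  rw [ucl_apply, ucl_apply, ucl_apply, ucl_apply]
  dsimp only
  have e3 : -z.1 + z.2 * s / m = -(z.1 - z.2 * s / m) := by ring
  rw [e3, C_even m b t (z.1 - z.2 * s / m) z.2]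
  have e1 : z.1 - z.2 * s / m - z.2 * t / m = z.1 - z.2 * (s + t) / m := by
    field_simp; ring
  have e2 : -(z.1 - z.2 * s / m) + z.2 * t / m = -z.1 + z.2 * (s + t) / m := by
    field_simp; ring
  have e4 : -(z.1 - z.2 * s / m) - -z.2 * t / m = -z.1 + z.2 * (s + t) / m := by
    field_simp; ring
  have e5 : -(-(z.1 - z.2 * s / m)) + -z.2 * t / m = z.1 - z.2 * (s + t) / m := by
    field_simp; ring
  rw [e1, e2, e4, e5, neg_neg]
  linear_combination (f (-z.1 + z.2 * (s + t) / m, -z.2) - f (z.1 - z.2 * (s + t) / m, z.2)) * hlaw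

lemma line_null (a c : ℝ) (h : ¬(a = 0 ∧ c = 0)) :
    volume {z : ℝ × ℝ | a * z.1 + c * z.2 = 0} = 0 := by
  classical
  set φ : (ℝ × ℝ) →ₗ[ℝ] ℝ :=
    a • (LinearMap.fst ℝ ℝ ℝ) + c • (LinearMap.snd ℝ ℝ ℝ) with hφ
  have hker : ((LinearMap.ker φ : Submodule ℝ (ℝ × ℝ)) : Set (ℝ × ℝ))
      = {z : ℝ × ℝ | a * z.1 + c * z.2 = 0} := by
    ext z
    simp [hφ, LinearMap.mem_ker, smul_eq_mul]
  rw [← hker]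
  apply Measure.addHaar_submodule
  intro htop
  apply h
  have hφ0 := LinearMap.ker_eq_top.mp htop
  constructor
  · have := congrArg (fun ψ : (ℝ × ℝ) →ₗ[ℝ] ℝ => ψ (1, 0)) hφ0
    simpa [hφ] using this
  · have := congrArg (fun ψ : (ℝ × ℝ) →ₗ[ℝ] ℝ => ψ (0, 1)) hφ0
    simpa [hφ] using this

lemma mp_shear (a : ℝ) :
    MeasurePreserving (fun z : ℝ × ℝ => (z.1 + a * z.2, z.2)) volume volume := by
  have h1 : MeasurePreserving (fun z : ℝ × ℝ => (z.1, z.2 + a * z.1))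
      ((volume : Measure ℝ).prod volume) ((volume : Measure ℝ).prod volume) := by
    exact MeasurePreserving.skew_product (g := fun x y => y + a * x)
      (MeasurePreserving.id _)
      (measurable_snd.add (measurable_const.mul measurable_fst))
      (Filter.Eventually.of_forall fun x => map_add_right_eq_self volume (a * x))
  have h2 := (Measure.measurePreserving_swap.comp h1).comp
    (Measure.measurePreserving_swap (μ := (volume : Measure ℝ)) (ν := (volume : Measure ℝ)))
  have hfun : ((Prod.swap ∘ fun z : ℝ × ℝ => (z.1, z.2 + a * z.1)) ∘ Prod.swap)
      = fun z : ℝ × ℝ => (z.1 + a * z.2, z.2) := by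
    funext z; rfl
  rw [Measure.volume_eq_prod]
  rw [hfun] at h2
  exact h2

lemma mp_T (m t : ℝ) :
    MeasurePreserving (fun z : ℝ × ℝ => (z.1 - z.2 * t / m, z.2)) volume volume := by
  have h := mp_shear (-(t / m))
  have hfun : (fun z : ℝ × ℝ => (z.1 + (-(t / m)) * z.2, z.2))
      = fun z : ℝ × ℝ => (z.1 - z.2 * t / m, z.2) := by
    funext z
    rw [show z.1 + (-(t / m)) * z.2 = z.1 - z.2 * t / m from by ring]
  rwa [hfun] at h

lemma mp_neg : MeasurePreserving (fun z : ℝ × ℝ => -z) volume volume := by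
  have h := (Measure.measurePreserving_neg (volume : Measure ℝ)).prod
    (Measure.measurePreserving_neg (volume : Measure ℝ))
  have hfun : (Prod.map (Neg.neg : ℝ → ℝ) (Neg.neg : ℝ → ℝ)) = fun z : ℝ × ℝ => -z := by
    funext z; rfl
  rw [Measure.volume_eq_prod]
  rwa [hfun] at h

lemma para (x y d : ℂ) (hd : Complex.normSq d = 1) :
    Complex.normSq (x + d * y) + Complex.normSq (x - d * y)
      = Complex.normSq (x + y) + Complex.normSq (x - y) := by
  have h : ∀ u v : ℂ, Complex.normSq (u + v) + Complex.normSq (u - v)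
      = 2 * Complex.normSq u + 2 * Complex.normSq v := by
    intro u v
    simp only [Complex.normSq_apply, Complex.add_re, Complex.add_im, Complex.sub_re,
      Complex.sub_im]
    ring
  rw [h, h, Complex.normSq_mul, hd]
  ring

lemma normSq_coeff (m : ℝ) (b : Option ℝ) (t : ℝ) (z : ℝ × ℝ) :
    Complex.normSq (1 - 2 * C m b t z) = 1 := by
  rw [C_eq]
  split_ifs with h
  · set r : ℝ := Real.sign t * (2 * |z.2| * invB b z.2) / m with hr
    have hD : Dc m b t z.2 = 1 + (r : ℂ) * Complex.I := by
      unfold Dc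
      rw [hr]
      push_cast
      ring
    have hne : (1 : ℂ) + (r : ℂ) * Complex.I ≠ 0 := by
      intro h0
      have := congrArg Complex.re h0
      simp at this
    rw [hD]
    have e : (1 : ℂ) - 2 * (1 / (1 + (r : ℂ) * Complex.I))
        = (-1 + (r : ℂ) * Complex.I) / (1 + (r : ℂ) * Complex.I) := by
      field_simp
      ring
    rw [e, Complex.normSq_div]
    have h1 : Complex.normSq (-1 + (r : ℂ) * Complex.I) = 1 + r ^ 2 := by
      simp [Complex.normSq_apply]
      ring
    have h2 : Complex.normSq (1 + (r : ℂ) * Complex.I) = 1 + r ^ 2 := by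
      simp [Complex.normSq_apply]
      ring
    rw [h1, h2, div_self (by positivity)]
  · simp

lemma norm_key (m : ℝ) (b : Option ℝ) (t : ℝ) (f : ℝ × ℝ → ℂ) (z : ℝ × ℝ) :
    ‖Ucl m b t f z‖ ^ 2 + ‖Ucl m b t f (-z)‖ ^ 2
      = ‖f (z.1 - z.2 * t / m, z.2)‖ ^ 2 + ‖f (-z.1 + z.2 * t / m, -z.2)‖ ^ 2 := by
  have hμ : Complex.normSq (1 - 2 * C m b t z) = 1 := normSq_coeff m b t z
  rw [ucl_apply, ucl_apply]
  have hz : (-z : ℝ × ℝ) = (-z.1, -z.2) := rfl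
  rw [hz]
  dsimp only
  have e1 : -z.1 - -z.2 * t / m = -z.1 + z.2 * t / m := by ring
  have e2 : -(-z.1) + -z.2 * t / m = z.1 - z.2 * t / m := by ring
  rw [e1, e2, neg_neg, C_even m b t z.1 z.2]
  have hz2 : (z.1, z.2) = z := rfl
  rw [hz2]
  set c := C m b t z
  set P := f (z.1 - z.2 * t / m, z.2)
  set Q := f (-z.1 + z.2 * t / m, -z.2)
  simp only [Complex.sq_norm]
  have e3 : P - c * (P - Q) = (P + Q) / 2 + (1 - 2 * c) * ((P - Q) / 2) := by ring
  have e4 : Q - c * (Q - P) = (P + Q) / 2 - (1 - 2 * c) * ((P - Q) / 2) := by ring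
  rw [e3, e4, para _ _ _ hμ,
    show (P + Q) / 2 + (P - Q) / 2 = P by ring,
    show (P + Q) / 2 - (P - Q) / 2 = Q by ring]

lemma heaviside_meas : Measurable heaviside := by
  unfold heaviside
  exact Measurable.ite (measurableSet_lt measurable_const measurable_id)
    measurable_const measurable_const

lemma invB_meas (b : Option ℝ) : Measurable (invB b) := by
  cases b with
  | none => exact measurable_const
  | some r =>
    show Measurable fun p : ℝ => 1 / (r * p ^ 2)
    exact measurable_const.div (measurable_const.mul (measurable_id.pow_const 2))

lemma C_meas (m : ℝ) (b : Option ℝ) (t : ℝ) : Measurable (C m b t) := by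
  unfold C
  apply Measurable.div
  · apply Complex.measurable_ofReal.comp
    apply Measurable.mul
    · exact heaviside_meas.comp ((measurable_const.mul measurable_fst).mul measurable_snd)
    · exact heaviside_meas.comp
        (((measurable_snd.mul measurable_const).abs.div measurable_const).sub
          measurable_fst.abs)
  · apply Measurable.add measurable_const
    apply Measurable.div _ measurable_const
    apply Measurable.mul measurable_const
    apply Measurable.mul
    · exact (measurable_const.mul
        (Complex.measurable_ofReal.comp measurable_snd.abs))
    · exact Complex.measurable_ofReal.comp ((invB_meas b).comp measurable_snd)

end Stmt12Aux

open Stmt12Aux in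
theorem stmt12 (m : ℝ) (hm : 0 < m) (b : Option ℝ) (hb : ∀ r : ℝ, b = some r → r ≠ 0) :
    (∀ s t : ℝ, 0 ≤ s * t → ∀ f : ℝ × ℝ → ℂ, MemLp f 2 volume →
        Ucl m b s (Ucl m b t f) =ᵐ[volume] Ucl m b (s + t) f) ∧
    (∀ t : ℝ, ∀ f : ℝ × ℝ → ℂ, MemLp f 2 volume →
        eLpNorm (Ucl m b t f) 2 volume = eLpNorm f 2 volume) := by
  constructor
  · -- group law
    intro s t hst f _hf
    have hN1 : volume {z : ℝ × ℝ | z.2 = 0} = 0 := by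
      have h := line_null 0 1 (by norm_num)
      have : {z : ℝ × ℝ | (0:ℝ) * z.1 + 1 * z.2 = 0} = {z : ℝ × ℝ | z.2 = 0} := by
        ext z; simp
      rwa [this] at h
    have hN2 : volume {z : ℝ × ℝ | m * z.1 = z.2 * s} = 0 := by
      have h := line_null m (-s) (by intro hc; exact hm.ne' hc.1)
      have : {z : ℝ × ℝ | m * z.1 + (-s) * z.2 = 0} = {z : ℝ × ℝ | m * z.1 = z.2 * s} := by
        ext z
        constructor
        · intro hz; simp only [Set.mem_setOf_eq] at hz ⊢; linarith [hz]
        · intro hz; simp only [Set.mem_setOf_eq] at hz ⊢; linarith [hz]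
      rwa [this] at h
    have hN : volume {z : ℝ × ℝ | z.2 = 0 ∨ m * z.1 = z.2 * s} = 0 := by
      have hsub : {z : ℝ × ℝ | z.2 = 0 ∨ m * z.1 = z.2 * s}
          ⊆ {z : ℝ × ℝ | z.2 = 0} ∪ {z : ℝ × ℝ | m * z.1 = z.2 * s} := by
        intro z hz; exact hz
      exact measure_mono_null hsub (measure_union_null hN1 hN2)
    have hae : ∀ᵐ z ∂(volume : Measure (ℝ × ℝ)), ¬(z.2 = 0 ∨ m * z.1 = z.2 * s) := by
      rw [ae_iff]
      refine measure_mono_null ?_ hN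
      intro z hz
      exact not_not.mp hz
    filter_upwards [hae] with z hz
    push_neg at hz
    exact ucl_comp_eq m hm b s t hst f z hz.1 hz.2
  · -- isometry
    intro t f hf
    have hT : MeasurePreserving (fun z : ℝ × ℝ => (z.1 - z.2 * t / m, z.2)) volume volume :=
      mp_T m t
    have hR : MeasurePreserving (fun z : ℝ × ℝ => (-z.1 + z.2 * t / m, -z.2)) volume volume := by
      have h := mp_neg.comp hT
      have hfun : ((fun z : ℝ × ℝ => -z) ∘ (fun z : ℝ × ℝ => (z.1 - z.2 * t / m, z.2)))
          = fun z : ℝ × ℝ => (-z.1 + z.2 * t / m, -z.2) := by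
        funext z
        show (-(z.1 - z.2 * t / m), -z.2) = (-z.1 + z.2 * t / m, -z.2)
        rw [show -(z.1 - z.2 * t / m) = -z.1 + z.2 * t / m from by ring]
      rwa [hfun] at h
    -- measurability of Ucl f
    have hfm := hf.aestronglyMeasurable
    have hX : AEStronglyMeasurable (fun z : ℝ × ℝ => f (z.1 - z.2 * t / m, z.2)) volume :=
      hfm.comp_quasiMeasurePreserving hT.quasiMeasurePreserving
    have hY : AEStronglyMeasurable (fun z : ℝ × ℝ => f (-z.1 + z.2 * t / m, -z.2)) volume :=
      hfm.comp_quasiMeasurePreserving hR.quasiMeasurePreserving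
    have hU : AEStronglyMeasurable (Ucl m b t f) volume := by
      have : Ucl m b t f = fun z => f (z.1 - z.2 * t / m, z.2)
          - C m b t z * (f (z.1 - z.2 * t / m, z.2) - f (-z.1 + z.2 * t / m, -z.2)) := rfl
      rw [this]
      exact hX.sub (((C_meas m b t).aestronglyMeasurable).mul (hX.sub hY))
    -- the squared enorms
    set G : ℝ × ℝ → ℝ≥0∞ := fun z => (‖Ucl m b t f z‖₊ : ℝ≥0∞) ^ 2 with hG
    set H : ℝ × ℝ → ℝ≥0∞ := fun z => (‖f z‖₊ : ℝ≥0∞) ^ 2 with hHdef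
    have hGm : AEMeasurable G volume := hU.enorm.pow_const 2
    have hHm : AEMeasurable H volume := hfm.enorm.pow_const 2
    have hHnegm : AEMeasurable (fun z : ℝ × ℝ => H (-z)) volume :=
      hHm.comp_quasiMeasurePreserving mp_neg.quasiMeasurePreserving
    have hGnegm : AEMeasurable (fun z : ℝ × ℝ => G (-z)) volume :=
      hGm.comp_quasiMeasurePreserving mp_neg.quasiMeasurePreserving
    -- pointwise identity in ℝ≥0∞
    have hsq : ∀ u : ℂ, (‖u‖₊ : ℝ≥0∞) ^ 2 = ENNReal.ofReal (‖u‖ ^ 2) := by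
      intro u
      rw [← enorm_eq_nnnorm, ← ofReal_norm, ← ENNReal.ofReal_pow (norm_nonneg u)]
    have hpoint : ∀ z : ℝ × ℝ, G z + G (-z)
        = H (z.1 - z.2 * t / m, z.2) + H (-z.1 + z.2 * t / m, -z.2) := by
      intro z
      rw [hG, hHdef]
      dsimp only
      rw [hsq, hsq, hsq, hsq, ← ENNReal.ofReal_add (by positivity) (by positivity),
        ← ENNReal.ofReal_add (by positivity) (by positivity)]
      exact congrArg _ (norm_key m b t f z)
    -- integral identities
    have negint : ∀ (F : ℝ × ℝ → ℝ≥0∞), AEMeasurable F volume →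
        ∫⁻ z, F (-z) = ∫⁻ z, F z := by
      intro F hF
      calc ∫⁻ z, F (-z) ∂volume
          = ∫⁻ z, F z ∂(Measure.map (fun z : ℝ × ℝ => -z) volume) := by
            rw [lintegral_map' (by rwa [mp_neg.map_eq]) mp_neg.measurable.aemeasurable]
        _ = ∫⁻ z, F z ∂volume := by rw [mp_neg.map_eq]
    have Tint : ∀ (F : ℝ × ℝ → ℝ≥0∞), AEMeasurable F volume →
        ∫⁻ z : ℝ × ℝ, F (z.1 - z.2 * t / m, z.2) = ∫⁻ z, F z := by
      intro F hF
      calc ∫⁻ z : ℝ × ℝ, F (z.1 - z.2 * t / m, z.2) ∂volume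
          = ∫⁻ z, F z ∂(Measure.map (fun z : ℝ × ℝ => (z.1 - z.2 * t / m, z.2)) volume) := by
            rw [lintegral_map' (by rwa [hT.map_eq]) hT.measurable.aemeasurable]
        _ = ∫⁻ z, F z ∂volume := by rw [hT.map_eq]
    have key : ∫⁻ z, G z = ∫⁻ z, H z := by
      have h2G : (2 : ℝ≥0∞) * ∫⁻ z, G z = (2 : ℝ≥0∞) * ∫⁻ z, H z := by
        calc (2 : ℝ≥0∞) * ∫⁻ z, G z
            = (∫⁻ z, G z) + ∫⁻ z, G (-z) := by rw [negint G hGm, two_mul]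
          _ = ∫⁻ z, (G z + G (-z)) := (lintegral_add_left' hGm _).symm
          _ = ∫⁻ z : ℝ × ℝ, (H (z.1 - z.2 * t / m, z.2) + H (-z.1 + z.2 * t / m, -z.2)) :=
              lintegral_congr hpoint
          _ = ∫⁻ z : ℝ × ℝ, (fun w : ℝ × ℝ => H w + H (-w)) (z.1 - z.2 * t / m, z.2) := by
              apply lintegral_congr
              intro z
              dsimp only
              rw [Prod.neg_mk, show -(z.1 - z.2 * t / m) = -z.1 + z.2 * t / m from by ring]
          _ = ∫⁻ w : ℝ × ℝ, (H w + H (-w)) := Tint _ (hHm.add hHnegm)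
          _ = (∫⁻ z, H z) + ∫⁻ z, H (-z) := lintegral_add_left' hHm _
          _ = (2 : ℝ≥0∞) * ∫⁻ z, H z := by rw [negint H hHm, two_mul]
      exact (ENNReal.mul_right_inj (by norm_num) (by norm_num)).mp h2G
    rw [eLpNorm_eq_lintegral_rpow_enorm_toReal (by norm_num) (by norm_num),
      eLpNorm_eq_lintegral_rpow_enorm_toReal (by norm_num) (by norm_num)]
    congr 1
    have htr : ((2 : ℝ≥0∞)).toReal = (2 : ℝ) := by norm_num
    rw [htr]
    calc ∫⁻ z, (‖Ucl m b t f z‖₊ : ℝ≥0∞) ^ (2 : ℝ) ∂volume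
        = ∫⁻ z, G z ∂volume := by
          apply lintegral_congr
          intro z
          rw [hG]
          dsimp only
          rw [← ENNReal.rpow_natCast ((‖Ucl m b t f z‖₊ : ℝ≥0∞)) 2]
          norm_num
      _ = ∫⁻ z, H z ∂volume := key
      _ = ∫⁻ z, (‖f z‖₊ : ℝ≥0∞) ^ (2 : ℝ) ∂volume := by
          apply lintegral_congr
          intro z
          rw [hHdef]
          dsimp only
          rw [← ENNReal.rpow_natCast ((‖f z‖₊ : ℝ≥0∞)) 2]
          norm_num
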